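/- Let P be a π-reversible stochastic matrix, let G and M be the Gibbs and Metropolis–Hastings orbit kernels for the same orbit partition, and set θ := sup over nonzero f : X → ℝ of ‖(M−G)f‖_π / ‖f‖_π. Then for every positive integer t, 0 ≤ ρ(M^t P M^t) − ρ(GPG) ≤ ρ(P)·(2θ^t + θ^{2t}). In particular, if θ < 1 then ρ(M^t P M^t) → ρ(GPG) as t → ∞. -/

import Mathlib

open Matrix Finset Filter Topology

/-- Total mass of the orbit (block) `i` under `π`. -/
noncomputable def orbMass {n k : ℕ} (π : Fin n → ℝ) (part : Fin n → Fin k) (i : Fin k) : ℝ :=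
  ∑ z ∈ Finset.univ.filter (fun z => part z = i), π z

/-- Number of states in the orbit (block) `i`. -/
def orbCard {n k : ℕ} (part : Fin n → Fin k) (i : Fin k) : ℕ :=
  (Finset.univ.filter (fun z => part z = i)).card

/-- The Gibbs orbit kernel. -/
noncomputable def gibbsKer {n k : ℕ} (π : Fin n → ℝ) (part : Fin n → Fin k) :
    Matrix (Fin n) (Fin n) ℝ :=
  Matrix.of fun x y => if part y = part x then π y / orbMass π part (part x) else 0

/-- The Metropolis–Hastings orbit kernel. -/
noncomputable def mhKer {n k : ℕ} (π : Fin n → ℝ) (part : Fin n → Fin k) :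
    Matrix (Fin n) (Fin n) ℝ :=
  Matrix.of fun x y =>
    if x = y then
      1 - ∑ z ∈ Finset.univ.filter (fun z => z ≠ x ∧ part z = part x),
            min 1 (π z / π x) / ((orbCard part (part x) : ℝ) - 1)
    else if part y = part x then
      min 1 (π y / π x) / ((orbCard part (part x) : ℝ) - 1)
    else 0

/-- The `π`-weighted inner product. -/
noncomputable def innerPi {n : ℕ} (π : Fin n → ℝ) (f g : Fin n → ℝ) : ℝ :=
  ∑ x, π x * f x * g x

/-- The `π`-weighted norm. -/
noncomputable def normPi {n : ℕ} (π : Fin n → ℝ) (f : Fin n → ℝ) : ℝ :=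
  Real.sqrt (∑ x, π x * f x * f x)

/-- Rayleigh-quotient form of the second-largest eigenvalue in modulus. -/
noncomputable def rho {n : ℕ} (π : Fin n → ℝ) (Q : Matrix (Fin n) (Fin n) ℝ) : ℝ :=
  sSup {r : ℝ | ∃ f : Fin n → ℝ, f ≠ 0 ∧ (∑ x, π x * f x) = 0 ∧
    r = |innerPi π f (Q.mulVec f)| / innerPi π f f}

namespace Stmt7Aux

variable {n : ℕ} {π : Fin n → ℝ}

lemma normPi_eq (f : Fin n → ℝ) : normPi π f = Real.sqrt (innerPi π f f) := rfl

lemma ip_self_nonneg (hπ : ∀ x, 0 < π x) (f : Fin n → ℝ) : 0 ≤ innerPi π f f := by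
  apply Finset.sum_nonneg; intro x _
  have : π x * f x * f x = π x * (f x * f x) := by ring
  rw [this]; exact mul_nonneg (hπ x).le (mul_self_nonneg _)

lemma ip_self_pos (hπ : ∀ x, 0 < π x) {f : Fin n → ℝ} (hf : f ≠ 0) :
    0 < innerPi π f f := by
  obtain ⟨x, hx⟩ := Function.ne_iff.mp hf
  have hx' : f x ≠ 0 := by simpa using hx
  refine Finset.sum_pos' (fun z _ => ?_) ⟨x, Finset.mem_univ x, ?_⟩
  · have h : π z * f z * f z = π z * (f z * f z) := by ring
    rw [h]; exact mul_nonneg (hπ z).le (mul_self_nonneg _)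
  · have h : π x * f x * f x = π x * (f x * f x) := by ring
    rw [h]; exact mul_pos (hπ x) (mul_self_pos.mpr hx')

lemma normPi_nonneg (f : Fin n → ℝ) : 0 ≤ normPi π f := Real.sqrt_nonneg _

lemma normPi_pos (hπ : ∀ x, 0 < π x) {f : Fin n → ℝ} (hf : f ≠ 0) : 0 < normPi π f :=
  Real.sqrt_pos.mpr (ip_self_pos hπ hf)

lemma normPi_mul_self (hπ : ∀ x, 0 < π x) (f : Fin n → ℝ) :
    normPi π f * normPi π f = innerPi π f f :=
  Real.mul_self_sqrt (ip_self_nonneg hπ f)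

lemma ip_sq_le (hπ : ∀ x, 0 < π x) (f g : Fin n → ℝ) :
    innerPi π f g ^ 2 ≤ innerPi π f f * innerPi π g g := by
  have h := sum_mul_sq_le_sq_mul_sq Finset.univ (fun x => Real.sqrt (π x) * f x)
      (fun x => Real.sqrt (π x) * g x)
  have e : ∀ (u v : Fin n → ℝ) (x : Fin n),
      (Real.sqrt (π x) * u x) * (Real.sqrt (π x) * v x) = π x * u x * v x := by
    intro u v x
    have : (Real.sqrt (π x) * u x) * (Real.sqrt (π x) * v x)
        = (Real.sqrt (π x) * Real.sqrt (π x)) * (u x * v x) := by ring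
    rw [this, Real.mul_self_sqrt (hπ x).le]; ring
  have e2 : ∀ (u : Fin n → ℝ) (x : Fin n),
      (Real.sqrt (π x) * u x) ^ 2 = π x * u x * u x := by
    intro u x; rw [sq]; exact e u u x
  calc innerPi π f g ^ 2 = (∑ x, (Real.sqrt (π x) * f x) * (Real.sqrt (π x) * g x)) ^ 2 := by
        unfold innerPi; congr 1; exact Finset.sum_congr rfl fun x _ => (e f g x).symm
    _ ≤ (∑ x, (Real.sqrt (π x) * f x) ^ 2) * (∑ x, (Real.sqrt (π x) * g x) ^ 2) := h
    _ = innerPi π f f * innerPi π g g := by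
        unfold innerPi; congr 1 <;> exact Finset.sum_congr rfl fun x _ => e2 _ x

lemma abs_ip_le (hπ : ∀ x, 0 < π x) (f g : Fin n → ℝ) :
    |innerPi π f g| ≤ normPi π f * normPi π g := by
  rw [← Real.sqrt_sq_eq_abs, normPi_eq, normPi_eq, ← Real.sqrt_mul (ip_self_nonneg hπ f)]
  exact Real.sqrt_le_sqrt (ip_sq_le hπ f g)

lemma ip_add_left (f g h : Fin n → ℝ) :
    innerPi π (f + g) h = innerPi π f h + innerPi π g h := by
  unfold innerPi; rw [← Finset.sum_add_distrib]
  exact Finset.sum_congr rfl fun x _ => by simp [Pi.add_apply]; ring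

lemma ip_add_right (f g h : Fin n → ℝ) :
    innerPi π f (g + h) = innerPi π f g + innerPi π f h := by
  unfold innerPi; rw [← Finset.sum_add_distrib]
  exact Finset.sum_congr rfl fun x _ => by simp [Pi.add_apply]; ring

lemma ip_sub_left (f g h : Fin n → ℝ) :
    innerPi π (f - g) h = innerPi π f h - innerPi π g h := by
  unfold innerPi; rw [← Finset.sum_sub_distrib]
  exact Finset.sum_congr rfl fun x _ => by simp [Pi.sub_apply]; ring

lemma ip_sub_right (f g h : Fin n → ℝ) :
    innerPi π f (g - h) = innerPi π f g - innerPi π f h := by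
  unfold innerPi; rw [← Finset.sum_sub_distrib]
  exact Finset.sum_congr rfl fun x _ => by simp [Pi.sub_apply]; ring

lemma ip_comm (f g : Fin n → ℝ) : innerPi π f g = innerPi π g f := by
  unfold innerPi; exact Finset.sum_congr rfl fun x _ => by ring

lemma ip_smul_left (c : ℝ) (f g : Fin n → ℝ) :
    innerPi π (c • f) g = c * innerPi π f g := by
  unfold innerPi; rw [Finset.mul_sum]
  exact Finset.sum_congr rfl fun x _ => by simp [Pi.smul_apply, smul_eq_mul]; ring

lemma ip_smul_right (c : ℝ) (f g : Fin n → ℝ) :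
    innerPi π f (c • g) = c * innerPi π f g := by
  unfold innerPi; rw [Finset.mul_sum]
  exact Finset.sum_congr rfl fun x _ => by simp [Pi.smul_apply, smul_eq_mul]; ring

lemma ip_zero_left (g : Fin n → ℝ) : innerPi π 0 g = 0 := by simp [innerPi]

lemma ip_zero_right (f : Fin n → ℝ) : innerPi π f 0 = 0 := by simp [innerPi]

lemma normPi_triangle (hπ : ∀ x, 0 < π x) (f g : Fin n → ℝ) :
    normPi π (f + g) ≤ normPi π f + normPi π g := by
  rw [normPi_eq]
  have h1 : innerPi π (f + g) (f + g) ≤ (normPi π f + normPi π g) ^ 2 := by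
    rw [ip_add_left, ip_add_right, ip_add_right]
    have hfg : innerPi π g f = innerPi π f g := ip_comm g f
    have h2 : innerPi π f g ≤ normPi π f * normPi π g :=
      le_trans (le_abs_self _) (abs_ip_le hπ f g)
    have h3 := normPi_mul_self hπ f
    have h4 := normPi_mul_self hπ g
    nlinarith
  calc Real.sqrt (innerPi π (f + g) (f + g)) ≤ Real.sqrt ((normPi π f + normPi π g) ^ 2) :=
        Real.sqrt_le_sqrt h1
    _ = normPi π f + normPi π g := by
        rw [Real.sqrt_sq (add_nonneg (normPi_nonneg f) (normPi_nonneg g))]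


section Kernel

variable {n : ℕ} {π : Fin n → ℝ} {Q : Matrix (Fin n) (Fin n) ℝ}

lemma adjQ (hrev : ∀ x y, π x * Q x y = π y * Q y x) (f g : Fin n → ℝ) :
    innerPi π f (Q.mulVec g) = innerPi π (Q.mulVec f) g := by
  have L : innerPi π f (Q.mulVec g) = ∑ x, ∑ y, (π x * Q x y) * (f x * g y) := by
    unfold innerPi Matrix.mulVec dotProduct
    exact Finset.sum_congr rfl fun x _ => by
      rw [Finset.mul_sum]; exact Finset.sum_congr rfl fun y _ => by ring
  have R : innerPi π (Q.mulVec f) g = ∑ y, ∑ x, (π y * Q y x) * (f x * g y) := by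
    unfold innerPi Matrix.mulVec dotProduct
    refine Finset.sum_congr rfl fun y _ => ?_
    show (π y * ∑ z, Q y z * f z) * g y = _
    rw [Finset.mul_sum, Finset.sum_mul]
    exact Finset.sum_congr rfl fun x _ => by ring
  rw [L, R]
  rw [Finset.sum_comm]
  exact Finset.sum_congr rfl fun y _ => Finset.sum_congr rfl fun x _ => by rw [hrev]

lemma stationaryQ (hrev : ∀ x y, π x * Q x y = π y * Q y x)
    (hrow : ∀ x, ∑ y, Q x y = 1) (y : Fin n) : ∑ x, π x * Q x y = π y := by
  calc ∑ x, π x * Q x y = ∑ x, π y * Q y x :=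
        Finset.sum_congr rfl fun x _ => hrev x y
    _ = π y * ∑ x, Q y x := by rw [Finset.mul_sum]
    _ = π y := by rw [hrow, mul_one]

lemma meanQ (hrev : ∀ x y, π x * Q x y = π y * Q y x)
    (hrow : ∀ x, ∑ y, Q x y = 1) (f : Fin n → ℝ) :
    ∑ x, π x * (Q.mulVec f) x = ∑ x, π x * f x := by
  unfold Matrix.mulVec dotProduct
  calc ∑ x, π x * ∑ y, Q x y * f y = ∑ x, ∑ y, (π x * Q x y) * f y := by
        exact Finset.sum_congr rfl fun x _ => by
          rw [Finset.mul_sum]; exact Finset.sum_congr rfl fun y _ => by ring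
    _ = ∑ y, ∑ x, (π x * Q x y) * f y := Finset.sum_comm
    _ = ∑ y, (∑ x, π x * Q x y) * f y := by
        exact Finset.sum_congr rfl fun y _ => (Finset.sum_mul _ _ _).symm
    _ = ∑ y, π y * f y := by
        exact Finset.sum_congr rfl fun y _ => by rw [stationaryQ hrev hrow]

lemma contractQ (hπ : ∀ x, 0 < π x) (h0 : ∀ x y, 0 ≤ Q x y)
    (hrev : ∀ x y, π x * Q x y = π y * Q y x) (hrow : ∀ x, ∑ y, Q x y = 1)
    (f : Fin n → ℝ) :
    innerPi π (Q.mulVec f) (Q.mulVec f) ≤ innerPi π f f := by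
  have point : ∀ x, (Q.mulVec f) x * (Q.mulVec f) x ≤ ∑ y, Q x y * (f y * f y) := by
    intro x
    have h := sum_mul_sq_le_sq_mul_sq Finset.univ (fun y => Real.sqrt (Q x y))
        (fun y => Real.sqrt (Q x y) * f y)
    have e1 : ∀ y, Real.sqrt (Q x y) * (Real.sqrt (Q x y) * f y) = Q x y * f y := by
      intro y
      rw [← mul_assoc, Real.mul_self_sqrt (h0 x y)]
    have e2 : ∀ y, Real.sqrt (Q x y) ^ 2 = Q x y := fun y => Real.sq_sqrt (h0 x y)
    have e3 : ∀ y, (Real.sqrt (Q x y) * f y) ^ 2 = Q x y * (f y * f y) := by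
      intro y; rw [mul_pow, e2]; ring
    calc (Q.mulVec f) x * (Q.mulVec f) x = ((Q.mulVec f) x) ^ 2 := (sq _).symm
      _ = (∑ y, Real.sqrt (Q x y) * (Real.sqrt (Q x y) * f y)) ^ 2 := by
          unfold Matrix.mulVec dotProduct
          congr 1; exact Finset.sum_congr rfl fun y _ => (e1 y).symm
      _ ≤ (∑ y, Real.sqrt (Q x y) ^ 2) * (∑ y, (Real.sqrt (Q x y) * f y) ^ 2) := h
      _ = (∑ y, Q x y) * (∑ y, Q x y * (f y * f y)) := by
          congr 1 <;> exact Finset.sum_congr rfl fun y _ => by first | exact e2 y | exact e3 y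
      _ = ∑ y, Q x y * (f y * f y) := by rw [hrow, one_mul]
  calc innerPi π (Q.mulVec f) (Q.mulVec f)
      = ∑ x, π x * ((Q.mulVec f) x * (Q.mulVec f) x) := by
        unfold innerPi; exact Finset.sum_congr rfl fun x _ => by ring
    _ ≤ ∑ x, π x * ∑ y, Q x y * (f y * f y) := by
        exact Finset.sum_le_sum fun x _ =>
          mul_le_mul_of_nonneg_left (point x) (hπ x).le
    _ = ∑ x, ∑ y, (π x * Q x y) * (f y * f y) := by
        exact Finset.sum_congr rfl fun x _ => by
          rw [Finset.mul_sum]; exact Finset.sum_congr rfl fun y _ => by ring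
    _ = ∑ y, (∑ x, π x * Q x y) * (f y * f y) := by
        rw [Finset.sum_comm]
        exact Finset.sum_congr rfl fun y _ => (Finset.sum_mul _ _ _).symm
    _ = innerPi π f f := by
        unfold innerPi
        exact Finset.sum_congr rfl fun y _ => by rw [stationaryQ hrev hrow]; ring

lemma normPi_contractQ (hπ : ∀ x, 0 < π x) (h0 : ∀ x y, 0 ≤ Q x y)
    (hrev : ∀ x y, π x * Q x y = π y * Q y x) (hrow : ∀ x, ∑ y, Q x y = 1)
    (f : Fin n → ℝ) : normPi π (Q.mulVec f) ≤ normPi π f :=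
  Real.sqrt_le_sqrt (contractQ hπ h0 hrev hrow f)

end Kernel


section Kernels

variable {n k : ℕ} {π : Fin n → ℝ} {part : Fin n → Fin k}

lemma orbMass_self_pos (hπ : ∀ x, 0 < π x) (x : Fin n) :
    0 < orbMass π part (part x) := by
  refine Finset.sum_pos' (fun z _ => (hπ z).le) ⟨x, ?_, hπ x⟩
  simp

lemma orbCard_self_pos (x : Fin n) : 0 < orbCard part (part x) := by
  refine Finset.card_pos.mpr ⟨x, ?_⟩
  simp

lemma gibbs_nonneg (hπ : ∀ x, 0 < π x) (x y : Fin n) : 0 ≤ gibbsKer π part x y := by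
  unfold gibbsKer
  by_cases h : part y = part x
  · simp only [Matrix.of_apply, h, if_pos rfl]
    exact div_nonneg (hπ y).le (orbMass_self_pos hπ x).le
  · simp [Matrix.of_apply, h]

lemma gibbs_block (h : part y ≠ part x) : gibbsKer π part x y = 0 := by
  simp [gibbsKer, h]

lemma gibbs_row (hπ : ∀ x, 0 < π x) (x : Fin n) : ∑ y, gibbsKer π part x y = 1 := by
  unfold gibbsKer
  calc ∑ y, (if part y = part x then π y / orbMass π part (part x) else 0)
      = ∑ y ∈ Finset.univ.filter (fun y => part y = part x),
          π y / orbMass π part (part x) := (Finset.sum_filter _ _).symm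
    _ = (∑ y ∈ Finset.univ.filter (fun y => part y = part x), π y)
          / orbMass π part (part x) := by rw [Finset.sum_div]
    _ = 1 := div_self (ne_of_gt (orbMass_self_pos hπ x))

lemma gibbs_rev (x y : Fin n) :
    π x * gibbsKer π part x y = π y * gibbsKer π part y x := by
  unfold gibbsKer
  by_cases h : part y = part x
  · simp only [Matrix.of_apply, if_pos h, if_pos h.symm, h, if_true]
    ring
  · simp only [Matrix.of_apply, if_neg h, if_neg (fun e => h (Eq.symm e))]
    ring

lemma mh_block (h : part y ≠ part x) : mhKer π part x y = 0 := by
  have hxy : x ≠ y := fun e => h (by rw [e])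
  simp [mhKer, hxy, h]

lemma filterB_eq (x : Fin n) :
    Finset.univ.filter (fun z => z ≠ x ∧ part z = part x)
      = (Finset.univ.filter (fun z => part z = part x)).erase x := by
  ext z; simp [and_comm]

lemma cardB (x : Fin n) :
    (Finset.univ.filter (fun z => z ≠ x ∧ part z = part x)).card
      = orbCard part (part x) - 1 := by
  rw [filterB_eq, Finset.card_erase_of_mem (by simp)]
  rfl

lemma mh_offdiag_nonneg (hπ : ∀ x, 0 < π x) (x z : Fin n) :
    0 ≤ min 1 (π z / π x) / ((orbCard part (part x) : ℝ) - 1) := by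
  apply div_nonneg
  · exact le_min zero_le_one (div_nonneg (hπ z).le (hπ x).le)
  · have := orbCard_self_pos (part := part) x
    have : (1 : ℝ) ≤ (orbCard part (part x) : ℝ) := by exact_mod_cast this
    linarith

lemma mh_S_le_one (hπ : ∀ x, 0 < π x) (x : Fin n) :
    ∑ z ∈ Finset.univ.filter (fun z => z ≠ x ∧ part z = part x),
        min 1 (π z / π x) / ((orbCard part (part x) : ℝ) - 1) ≤ 1 := by
  set c := orbCard part (part x) with hc
  have hc1 : 1 ≤ c := orbCard_self_pos x
  have hterm : ∀ z ∈ Finset.univ.filter (fun z => z ≠ x ∧ part z = part x),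
      min 1 (π z / π x) / ((c : ℝ) - 1) ≤ 1 / ((c : ℝ) - 1) := by
    intro z _
    have h1 : (1:ℝ) ≤ (c:ℝ) := by exact_mod_cast hc1
    exact div_le_div_of_nonneg_right (min_le_left _ _) (by linarith)
  calc ∑ z ∈ Finset.univ.filter (fun z => z ≠ x ∧ part z = part x),
        min 1 (π z / π x) / ((c : ℝ) - 1)
      ≤ ∑ z ∈ Finset.univ.filter (fun z => z ≠ x ∧ part z = part x),
        1 / ((c : ℝ) - 1) := Finset.sum_le_sum hterm
    _ = ((c - 1 : ℕ) : ℝ) * (1 / ((c : ℝ) - 1)) := by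
        rw [Finset.sum_const, cardB, nsmul_eq_mul]
    _ = ((c : ℝ) - 1) * (1 / ((c : ℝ) - 1)) := by
        rw [Nat.cast_sub hc1, Nat.cast_one]
    _ ≤ 1 := by
        rcases eq_or_lt_of_le (by exact_mod_cast hc1 : (1:ℝ) ≤ (c:ℝ)) with h | h
        · rw [← h]; norm_num
        · rw [mul_one_div, div_self (by linarith)]

lemma mh_nonneg (hπ : ∀ x, 0 < π x) (x y : Fin n) : 0 ≤ mhKer π part x y := by
  unfold mhKer
  by_cases hxy : x = y
  · simp only [Matrix.of_apply, if_pos hxy]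
    have := mh_S_le_one (part := part) hπ x
    linarith
  · simp only [Matrix.of_apply, if_neg hxy]
    by_cases h : part y = part x
    · rw [if_pos h]; exact mh_offdiag_nonneg hπ x y
    · rw [if_neg h]

lemma mh_row (hπ : ∀ x, 0 < π x) (x : Fin n) : ∑ y, mhKer π part x y = 1 := by
  have hsplit := Finset.add_sum_erase Finset.univ (fun y => mhKer π part x y)
      (Finset.mem_univ x)
  rw [← hsplit]
  beta_reduce
  have hM : mhKer π part x x = 1 - ∑ z ∈ Finset.univ.filter
      (fun z => z ≠ x ∧ part z = part x),
      min 1 (π z / π x) / ((orbCard part (part x) : ℝ) - 1) := by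
    simp [mhKer]
  have hrest : ∑ y ∈ Finset.univ.erase x, mhKer π part x y
      = ∑ z ∈ Finset.univ.filter (fun z => z ≠ x ∧ part z = part x),
          min 1 (π z / π x) / ((orbCard part (part x) : ℝ) - 1) := by
    rw [filterB_eq]
    have : (Finset.univ.filter (fun z => part z = part x)).erase x
        = (Finset.univ.erase x).filter (fun z => part z = part x) := by
      ext z; simp [and_comm]
    rw [this, Finset.sum_filter]
    refine Finset.sum_congr rfl fun y hy => ?_
    have hyx : y ≠ x := Finset.ne_of_mem_erase hy
    by_cases h : part y = part x
    · rw [if_pos h]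
      simp [mhKer, (Ne.symm hyx : x ≠ y), h]
    · rw [if_neg h, mh_block h]
  rw [hM, hrest]; ring

lemma mh_rev (hπ : ∀ x, 0 < π x) (x y : Fin n) :
    π x * mhKer π part x y = π y * mhKer π part y x := by
  by_cases hxy : x = y
  · rw [hxy]
  · by_cases h : part y = part x
    · have e1 : mhKer π part x y
          = min 1 (π y / π x) / ((orbCard part (part x) : ℝ) - 1) := by
        simp [mhKer, hxy, h]
      have e2 : mhKer π part y x
          = min 1 (π x / π y) / ((orbCard part (part y) : ℝ) - 1) := by
        simp [mhKer, (Ne.symm hxy : y ≠ x), h.symm]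
      rw [e1, e2, h]
      have l : π x * min 1 (π y / π x) = min (π x) (π y) := by
        rw [mul_min_of_nonneg _ _ (hπ x).le, mul_one,
          mul_div_cancel₀ _ (ne_of_gt (hπ x))]
      have r : π y * min 1 (π x / π y) = min (π y) (π x) := by
        rw [mul_min_of_nonneg _ _ (hπ y).le, mul_one,
          mul_div_cancel₀ _ (ne_of_gt (hπ y))]
      rw [mul_div_assoc', mul_div_assoc', l, r, min_comm]
    · rw [mh_block h, mh_block (fun e => h (Eq.symm e))]
      ring

end Kernels


section MatId

variable {n k : ℕ} {π : Fin n → ℝ} {part : Fin n → Fin k}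

lemma mul_gibbs_of (A : Matrix (Fin n) (Fin n) ℝ)
    (hArow : ∀ x, ∑ y, A x y = 1)
    (hAblock : ∀ x y, part y ≠ part x → A x y = 0) :
    A * gibbsKer π part = gibbsKer π part := by
  ext x y
  rw [Matrix.mul_apply]
  have key : ∀ z, A x z * gibbsKer π part z y = A x z * gibbsKer π part x y := by
    intro z
    by_cases h : part z = part x
    · congr 1
      show (if part y = part z then π y / orbMass π part (part z) else 0)
        = (if part y = part x then π y / orbMass π part (part x) else 0)
      rw [h]
    · rw [hAblock x z h, zero_mul, zero_mul]
  calc ∑ z, A x z * gibbsKer π part z y = ∑ z, A x z * gibbsKer π part x y :=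
        Finset.sum_congr rfl fun z _ => key z
    _ = (∑ z, A x z) * gibbsKer π part x y := (Finset.sum_mul _ _ _).symm
    _ = gibbsKer π part x y := by rw [hArow, one_mul]

lemma gibbs_mul_of (hπ : ∀ x, 0 < π x) (A : Matrix (Fin n) (Fin n) ℝ)
    (hArow : ∀ x, ∑ y, A x y = 1)
    (hArev : ∀ x y, π x * A x y = π y * A y x)
    (hAblock : ∀ x y, part y ≠ part x → A x y = 0) :
    gibbsKer π part * A = gibbsKer π part := by
  ext x y
  rw [Matrix.mul_apply]
  by_cases hy : part y = part x
  · have key : ∀ z, gibbsKer π part x z * A z y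
        = (π y / orbMass π part (part x)) * A y z := by
      intro z
      by_cases h : part z = part x
      · show (if part z = part x then π z / orbMass π part (part x) else 0) * A z y = _
        rw [if_pos h, div_mul_eq_mul_div, hArev z y, mul_comm (π y) (A y z),
          mul_div_assoc, mul_comm (A y z) _]
      · show (if part z = part x then π z / orbMass π part (part x) else 0) * A z y = _
        rw [if_neg h, zero_mul, hAblock y z (fun e => h (e.trans hy)), mul_zero]
    calc ∑ z, gibbsKer π part x z * A z y
        = ∑ z, (π y / orbMass π part (part x)) * A y z :=
          Finset.sum_congr rfl fun z _ => key z
      _ = (π y / orbMass π part (part x)) * ∑ z, A y z := by rw [Finset.mul_sum]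
      _ = π y / orbMass π part (part x) := by rw [hArow, mul_one]
      _ = gibbsKer π part x y := by
          show _ = if part y = part x then π y / orbMass π part (part x) else 0
          rw [if_pos hy]
  · have key : ∀ z, gibbsKer π part x z * A z y = 0 := by
      intro z
      by_cases h : part z = part x
      · rw [hAblock z y (fun e => hy (e.symm ▸ h)), mul_zero]
      · rw [gibbs_block h, zero_mul]
    rw [Finset.sum_congr rfl fun z _ => key z, Finset.sum_const_zero]
    show (0:ℝ) = if part y = part x then π y / orbMass π part (part x) else 0
    rw [if_neg hy]

lemma gibbs_mul_gibbs (hπ : ∀ x, 0 < π x) :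
    gibbsKer π part * gibbsKer π part = gibbsKer π part :=
  mul_gibbs_of _ (gibbs_row hπ) (fun _ _ h => gibbs_block h)

lemma mh_mul_gibbs (hπ : ∀ x, 0 < π x) :
    mhKer π part * gibbsKer π part = gibbsKer π part :=
  mul_gibbs_of _ (mh_row hπ) (fun _ _ h => mh_block h)

lemma gibbs_mul_mh (hπ : ∀ x, 0 < π x) :
    gibbsKer π part * mhKer π part = gibbsKer π part :=
  gibbs_mul_of hπ _ (mh_row hπ) (mh_rev hπ) (fun _ _ h => mh_block h)

lemma mhpow_mul_gibbs (hπ : ∀ x, 0 < π x) (t : ℕ) :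
    mhKer π part ^ t * gibbsKer π part = gibbsKer π part := by
  induction t with
  | zero => simp
  | succ t ih => rw [pow_succ, mul_assoc, mh_mul_gibbs hπ, ih]

lemma gibbs_mul_mhpow (hπ : ∀ x, 0 < π x) (t : ℕ) :
    gibbsKer π part * mhKer π part ^ t = gibbsKer π part := by
  induction t with
  | zero => simp
  | succ t ih => rw [pow_succ, ← mul_assoc, ih, gibbs_mul_mh hπ]

lemma delta_pow (hπ : ∀ x, 0 < π x) (t : ℕ) (ht : 1 ≤ t) :
    (mhKer π part - gibbsKer π part) ^ t = mhKer π part ^ t - gibbsKer π part := by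
  induction t with
  | zero => omega
  | succ t ih =>
    rcases Nat.eq_or_lt_of_le ht with h | h
    · rw [← h]; simp
    · have ht' : 1 ≤ t := by omega
      rw [pow_succ, ih ht', sub_mul, mul_sub, mul_sub, ← pow_succ,
        mhpow_mul_gibbs hπ, gibbs_mul_mh hπ, gibbs_mul_gibbs hπ]
      abel

end MatId


section Rho

variable {n : ℕ} {π : Fin n → ℝ} {Q : Matrix (Fin n) (Fin n) ℝ}

lemma normPi_zero : normPi π (0 : Fin n → ℝ) = 0 := by simp [normPi]

lemma normPi_neg (f : Fin n → ℝ) : normPi π (-f) = normPi π f := by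
  unfold normPi
  congr 1
  exact Finset.sum_congr rfl fun x _ => by rw [Pi.neg_apply]; ring

lemma normPi_sub_le (hπ : ∀ x, 0 < π x) (f g : Fin n → ℝ) :
    normPi π (f - g) ≤ normPi π f + normPi π g := by
  rw [sub_eq_add_neg]
  refine (normPi_triangle hπ f (-g)).trans ?_
  rw [normPi_neg]

lemma mz_smul (c : ℝ) {f : Fin n → ℝ} (h : ∑ x, π x * f x = 0) :
    ∑ x, π x * (c • f) x = 0 := by
  have e : ∀ x : Fin n, π x * (c • f) x = c * (π x * f x) := fun x => by
    simp [Pi.smul_apply, smul_eq_mul]; ring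
  rw [Finset.sum_congr rfl fun x _ => e x, ← Finset.mul_sum, h, mul_zero]

lemma mz_add {f g : Fin n → ℝ} (hf : ∑ x, π x * f x = 0) (hg : ∑ x, π x * g x = 0) :
    ∑ x, π x * (f + g) x = 0 := by
  have e : ∀ x : Fin n, π x * (f + g) x = π x * f x + π x * g x := fun x => by
    simp [Pi.add_apply]; ring
  rw [Finset.sum_congr rfl fun x _ => e x, Finset.sum_add_distrib, hf, hg, add_zero]

lemma mz_sub {f g : Fin n → ℝ} (hf : ∑ x, π x * f x = 0) (hg : ∑ x, π x * g x = 0) :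
    ∑ x, π x * (f - g) x = 0 := by
  have e : ∀ x : Fin n, π x * (f - g) x = π x * f x - π x * g x := fun x => by
    simp [Pi.sub_apply]; ring
  rw [Finset.sum_congr rfl fun x _ => e x, Finset.sum_sub_distrib, hf, hg, sub_zero]

lemma rho_nonneg (hπ : ∀ x, 0 < π x) (Q : Matrix (Fin n) (Fin n) ℝ) :
    0 ≤ rho π Q := by
  apply Real.sSup_nonneg
  rintro r ⟨f, hf, hmz, rfl⟩
  exact div_nonneg (abs_nonneg _) (ip_self_nonneg hπ f)

lemma rho_bddAbove (hπ : ∀ x, 0 < π x)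
    (hQc : ∀ f, innerPi π (Q.mulVec f) (Q.mulVec f) ≤ innerPi π f f) :
    BddAbove {r : ℝ | ∃ f : Fin n → ℝ, f ≠ 0 ∧ (∑ x, π x * f x) = 0 ∧
      r = |innerPi π f (Q.mulVec f)| / innerPi π f f} := by
  refine ⟨1, ?_⟩
  rintro r ⟨f, hf, hmz, rfl⟩
  rw [div_le_one (ip_self_pos hπ hf)]
  calc |innerPi π f (Q.mulVec f)| ≤ normPi π f * normPi π (Q.mulVec f) :=
        abs_ip_le hπ f _
    _ ≤ normPi π f * normPi π f := by
        apply mul_le_mul_of_nonneg_left _ (normPi_nonneg f)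
        exact Real.sqrt_le_sqrt (hQc f)
    _ = innerPi π f f := normPi_mul_self hπ f

lemma rho_rayleigh (hπ : ∀ x, 0 < π x)
    (hQc : ∀ f, innerPi π (Q.mulVec f) (Q.mulVec f) ≤ innerPi π f f)
    (f : Fin n → ℝ) (hmz : ∑ x, π x * f x = 0) :
    |innerPi π f (Q.mulVec f)| ≤ rho π Q * innerPi π f f := by
  by_cases hf : f = 0
  · subst hf
    simp [ip_zero_left, innerPi]
  · have hmem : |innerPi π f (Q.mulVec f)| / innerPi π f f ∈
        {r : ℝ | ∃ f : Fin n → ℝ, f ≠ 0 ∧ (∑ x, π x * f x) = 0 ∧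
          r = |innerPi π f (Q.mulVec f)| / innerPi π f f} := ⟨f, hf, hmz, rfl⟩
    have h := le_csSup (rho_bddAbove hπ hQc) hmem
    rw [div_le_iff₀ (ip_self_pos hπ hf)] at h
    exact h

lemma rho_bilinear (hπ : ∀ x, 0 < π x)
    (hadj : ∀ f g : Fin n → ℝ, innerPi π f (Q.mulVec g) = innerPi π (Q.mulVec f) g)
    (hQc : ∀ f, innerPi π (Q.mulVec f) (Q.mulVec f) ≤ innerPi π f f)
    {u v : Fin n → ℝ} (hu : ∑ x, π x * u x = 0) (hv : ∑ x, π x * v x = 0) :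
    |innerPi π u (Q.mulVec v)| ≤ rho π Q * (normPi π u * normPi π v) := by
  by_cases hu0 : u = 0
  · subst hu0
    rw [ip_zero_left, abs_zero]
    exact mul_nonneg (rho_nonneg hπ Q)
      (mul_nonneg (normPi_nonneg _) (normPi_nonneg _))
  by_cases hv0 : v = 0
  · subst hv0
    rw [Matrix.mulVec_zero, ip_zero_right, abs_zero]
    exact mul_nonneg (rho_nonneg hπ Q)
      (mul_nonneg (normPi_nonneg _) (normPi_nonneg _))
  set a := normPi π u with ha_def
  set b := normPi π v with hb_def
  have ha : 0 < a := normPi_pos hπ hu0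
  have hb : 0 < b := normPi_pos hπ hv0
  set u' := b • u with hu'_def
  set v' := a • v with hv'_def
  have hu' : ∑ x, π x * u' x = 0 := mz_smul b hu
  have hv' : ∑ x, π x * v' x = 0 := mz_smul a hv
  have h1 := rho_rayleigh hπ hQc (u' + v') (mz_add hu' hv')
  have h2 := rho_rayleigh hπ hQc (u' - v') (mz_sub hu' hv')
  have hsym : innerPi π v' (Q.mulVec u') = innerPi π u' (Q.mulVec v') := by
    rw [hadj v' u']; exact ip_comm _ _
  have expand : innerPi π (u' + v') (Q.mulVec (u' + v'))
      - innerPi π (u' - v') (Q.mulVec (u' - v'))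
      = 4 * innerPi π u' (Q.mulVec v') := by
    simp only [Matrix.mulVec_add, Matrix.mulVec_sub, ip_add_left, ip_add_right,
      ip_sub_left, ip_sub_right]
    linarith [hsym]
  have par : innerPi π (u' + v') (u' + v') + innerPi π (u' - v') (u' - v')
      = 2 * (innerPi π u' u' + innerPi π v' v') := by
    simp only [ip_add_left, ip_add_right, ip_sub_left, ip_sub_right]
    have := ip_comm (π := π) u' v'
    linarith
  have key : |4 * innerPi π u' (Q.mulVec v')|
      ≤ rho π Q * (2 * (innerPi π u' u' + innerPi π v' v')) := by
    rw [← expand, ← par]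
    calc |innerPi π (u' + v') (Q.mulVec (u' + v'))
          - innerPi π (u' - v') (Q.mulVec (u' - v'))|
        ≤ |innerPi π (u' + v') (Q.mulVec (u' + v'))|
          + |innerPi π (u' - v') (Q.mulVec (u' - v'))| := abs_sub _ _
      _ ≤ rho π Q * innerPi π (u' + v') (u' + v')
          + rho π Q * innerPi π (u' - v') (u' - v') := add_le_add h1 h2
      _ = rho π Q * (innerPi π (u' + v') (u' + v')
          + innerPi π (u' - v') (u' - v')) := by ring
  have e_u' : innerPi π u' u' = (b * b) * (a * a) := by
    rw [hu'_def, ip_smul_left, ip_smul_right, ← normPi_mul_self hπ u, ← ha_def]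
    ring
  have e_v' : innerPi π v' v' = (a * a) * (b * b) := by
    rw [hv'_def, ip_smul_left, ip_smul_right, ← normPi_mul_self hπ v, ← hb_def]
    ring
  have e_cross : innerPi π u' (Q.mulVec v')
      = (a * b) * innerPi π u (Q.mulVec v) := by
    rw [hu'_def, hv'_def, Matrix.mulVec_smul, ip_smul_left, ip_smul_right]
    ring
  rw [e_cross, e_u', e_v'] at key
  set X := innerPi π u (Q.mulVec v) with hX
  have hab : 0 < a * b := mul_pos ha hb
  have keyL : |4 * ((a * b) * X)| = 4 * ((a * b) * |X|) := by
    rw [abs_mul, abs_mul, abs_of_nonneg hab.le]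
    norm_num
  rw [keyL] at key
  have h5 : (a * b) * |X| ≤ (a * b) * (rho π Q * (a * b)) := by nlinarith
  have := le_of_mul_le_mul_left h5 hab
  linarith

end Rho

section Pow

variable {n : ℕ} {π : Fin n → ℝ} {Q : Matrix (Fin n) (Fin n) ℝ}

lemma adjQ_pow (hrev : ∀ x y, π x * Q x y = π y * Q y x) (t : ℕ) (f g : Fin n → ℝ) :
    innerPi π f ((Q ^ t).mulVec g) = innerPi π ((Q ^ t).mulVec f) g := by
  induction t generalizing f g with
  | zero => simp [Matrix.one_mulVec]
  | succ t ih =>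
    rw [pow_succ, ← Matrix.mulVec_mulVec, ih, adjQ hrev, Matrix.mulVec_mulVec,
      ← pow_succ', ← pow_succ]

lemma contractQ_pow (hπ : ∀ x, 0 < π x) (h0 : ∀ x y, 0 ≤ Q x y)
    (hrev : ∀ x y, π x * Q x y = π y * Q y x) (hrow : ∀ x, ∑ y, Q x y = 1)
    (t : ℕ) (f : Fin n → ℝ) :
    innerPi π ((Q ^ t).mulVec f) ((Q ^ t).mulVec f) ≤ innerPi π f f := by
  induction t generalizing f with
  | zero => simp [Matrix.one_mulVec]
  | succ t ih =>
    rw [pow_succ, ← Matrix.mulVec_mulVec]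
    exact (ih (Q.mulVec f)).trans (contractQ hπ h0 hrev hrow f)

lemma meanQ_pow (hrev : ∀ x y, π x * Q x y = π y * Q y x)
    (hrow : ∀ x, ∑ y, Q x y = 1) (t : ℕ) (f : Fin n → ℝ) :
    ∑ x, π x * ((Q ^ t).mulVec f) x = ∑ x, π x * f x := by
  induction t generalizing f with
  | zero => simp [Matrix.one_mulVec]
  | succ t ih =>
    rw [pow_succ, ← Matrix.mulVec_mulVec, ih, meanQ hrev hrow]

end Pow


section Helpers

variable {n : ℕ} {π : Fin n → ℝ} {Q : Matrix (Fin n) (Fin n) ℝ}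

lemma rho_le (hπ : ∀ x, 0 < π x) {a : ℝ} (ha : 0 ≤ a)
    (h : ∀ f : Fin n → ℝ, f ≠ 0 → (∑ x, π x * f x) = 0 →
      |innerPi π f (Q.mulVec f)| ≤ a * innerPi π f f) :
    rho π Q ≤ a := by
  refine Real.sSup_le ?_ ha
  rintro r ⟨f, hf, hmz, rfl⟩
  rw [div_le_iff₀ (ip_self_pos hπ hf)]
  linarith [h f hf hmz]

lemma le_rho (hπ : ∀ x, 0 < π x)
    (hQc : ∀ f, innerPi π (Q.mulVec f) (Q.mulVec f) ≤ innerPi π f f)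
    {f : Fin n → ℝ} (hf : f ≠ 0) (hmz : (∑ x, π x * f x) = 0) :
    |innerPi π f (Q.mulVec f)| / innerPi π f f ≤ rho π Q :=
  le_csSup (rho_bddAbove hπ hQc) ⟨f, hf, hmz, rfl⟩

end Helpers

end Stmt7Aux

open Stmt7Aux

/-- with `θ` the `π`-operator norm of `M − G`, for every `t ≥ 1` we have
`0 ≤ ρ(MᵗPMᵗ) − ρ(GPG) ≤ ρ(P)(2θᵗ + θ^{2t})`; in particular if `θ < 1` then
`ρ(MᵗPMᵗ) → ρ(GPG)` as `t → ∞`. -/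
theorem stmt7 {n k : ℕ} (hn : 0 < n)
    (π : Fin n → ℝ) (hπpos : ∀ x, 0 < π x) (hπsum : ∑ x, π x = 1)
    (part : Fin n → Fin k) (hpart : Function.Surjective part)
    (P : Matrix (Fin n) (Fin n) ℝ)
    (hPnonneg : ∀ x y, 0 ≤ P x y) (hProw : ∀ x, ∑ y, P x y = 1)
    (hPrev : ∀ x y, π x * P x y = π y * P y x)
    (θ : ℝ)
    (hθ : θ = sSup {r : ℝ | ∃ f : Fin n → ℝ, f ≠ 0 ∧
      r = normPi π ((mhKer π part - gibbsKer π part).mulVec f) / normPi π f}) :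
    (∀ t : ℕ, 1 ≤ t →
        0 ≤ rho π (mhKer π part ^ t * P * mhKer π part ^ t)
              - rho π (gibbsKer π part * P * gibbsKer π part) ∧
        rho π (mhKer π part ^ t * P * mhKer π part ^ t)
              - rho π (gibbsKer π part * P * gibbsKer π part)
            ≤ rho π P * (2 * θ ^ t + θ ^ (2 * t))) ∧
      (θ < 1 →
        Tendsto (fun t : ℕ => rho π (mhKer π part ^ t * P * mhKer π part ^ t)) atTop
          (𝓝 (rho π (gibbsKer π part * P * gibbsKer π part)))) := by
  classical
  set M := mhKer π part with hM_def
  set G := gibbsKer π part with hG_def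
  have hG0 : ∀ x y, 0 ≤ G x y := gibbs_nonneg hπpos
  have hGrow : ∀ x, ∑ y, G x y = 1 := gibbs_row hπpos
  have hGrev : ∀ x y, π x * G x y = π y * G y x := fun x y => gibbs_rev x y
  have hM0 : ∀ x y, 0 ≤ M x y := mh_nonneg hπpos
  have hMrow : ∀ x, ∑ y, M x y = 1 := mh_row hπpos
  have hMrev : ∀ x y, π x * M x y = π y * M y x := mh_rev hπpos
  have adjG : ∀ f g : Fin n → ℝ,
      innerPi π f (G.mulVec g) = innerPi π (G.mulVec f) g := fun f g => adjQ hGrev f g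
  have adjP : ∀ f g : Fin n → ℝ,
      innerPi π f (P.mulVec g) = innerPi π (P.mulVec f) g := fun f g => adjQ hPrev f g
  have adjMpow : ∀ (t : ℕ) (f g : Fin n → ℝ),
      innerPi π f ((M ^ t).mulVec g) = innerPi π ((M ^ t).mulVec f) g :=
    fun t => adjQ_pow hMrev t
  have cG : ∀ f, innerPi π (G.mulVec f) (G.mulVec f) ≤ innerPi π f f :=
    contractQ hπpos hG0 hGrev hGrow
  have cP : ∀ f, innerPi π (P.mulVec f) (P.mulVec f) ≤ innerPi π f f :=
    contractQ hπpos hPnonneg hPrev hProw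
  have cMpow : ∀ (t : ℕ) f,
      innerPi π ((M ^ t).mulVec f) ((M ^ t).mulVec f) ≤ innerPi π f f :=
    fun t => contractQ_pow hπpos hM0 hMrev hMrow t
  have mG : ∀ f, ∑ x, π x * (G.mulVec f) x = ∑ x, π x * f x := meanQ hGrev hGrow
  have mMpow : ∀ (t : ℕ) f, ∑ x, π x * ((M ^ t).mulVec f) x = ∑ x, π x * f x :=
    fun t => meanQ_pow hMrev hMrow t
  have cGPG : ∀ f, innerPi π ((G * P * G).mulVec f) ((G * P * G).mulVec f)
      ≤ innerPi π f f := by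
    intro f
    have e : (G * P * G).mulVec f = G.mulVec (P.mulVec (G.mulVec f)) := by
      rw [Matrix.mulVec_mulVec, Matrix.mulVec_mulVec]
    rw [e]
    exact (cG _).trans ((cP _).trans (cG f))
  have cQt : ∀ (t : ℕ) f,
      innerPi π ((M ^ t * P * M ^ t).mulVec f) ((M ^ t * P * M ^ t).mulVec f)
        ≤ innerPi π f f := by
    intro t f
    have e : (M ^ t * P * M ^ t).mulVec f
        = (M ^ t).mulVec (P.mulVec ((M ^ t).mulVec f)) := by
      rw [Matrix.mulVec_mulVec, Matrix.mulVec_mulVec]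
    rw [e]
    exact (cMpow t _).trans ((cP _).trans (cMpow t f))
  -- θ facts
  have hθ0 : 0 ≤ θ := by
    rw [hθ]
    apply Real.sSup_nonneg
    rintro r ⟨f, hf, rfl⟩
    exact div_nonneg (normPi_nonneg _) (normPi_nonneg _)
  have hTbdd : BddAbove {r : ℝ | ∃ f : Fin n → ℝ, f ≠ 0 ∧
      r = normPi π ((M - G).mulVec f) / normPi π f} := by
    refine ⟨2, ?_⟩
    rintro r ⟨f, hf, rfl⟩
    rw [div_le_iff₀ (normPi_pos hπpos hf), Matrix.sub_mulVec]
    calc normPi π (M.mulVec f - G.mulVec f)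
        ≤ normPi π (M.mulVec f) + normPi π (G.mulVec f) := normPi_sub_le hπpos _ _
      _ ≤ normPi π f + normPi π f :=
          add_le_add (normPi_contractQ hπpos hM0 hMrev hMrow f)
            (normPi_contractQ hπpos hG0 hGrev hGrow f)
      _ = 2 * normPi π f := by ring
  have hΔ : ∀ f, normPi π ((M - G).mulVec f) ≤ θ * normPi π f := by
    intro f
    by_cases hf : f = 0
    · subst hf
      simp [Matrix.mulVec_zero, normPi_zero]
    · have hmem : normPi π ((M - G).mulVec f) / normPi π f ∈
          {r : ℝ | ∃ f : Fin n → ℝ, f ≠ 0 ∧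
            r = normPi π ((M - G).mulVec f) / normPi π f} := ⟨f, hf, rfl⟩
      have h := le_csSup hTbdd hmem
      rw [← hθ] at h
      rw [div_le_iff₀ (normPi_pos hπpos hf)] at h
      exact h
  have hΔpow : ∀ (t : ℕ) f, normPi π (((M - G) ^ t).mulVec f) ≤ θ ^ t * normPi π f := by
    intro t
    induction t with
    | zero => intro f; simp [Matrix.one_mulVec]
    | succ t ih =>
      intro f
      rw [pow_succ, ← Matrix.mulVec_mulVec]
      calc normPi π (((M - G) ^ t).mulVec ((M - G).mulVec f))
          ≤ θ ^ t * normPi π ((M - G).mulVec f) := ih _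
        _ ≤ θ ^ t * (θ * normPi π f) :=
            mul_le_mul_of_nonneg_left (hΔ f) (pow_nonneg hθ0 t)
        _ = θ ^ (t + 1) * normPi π f := by ring
  -- upper bound
  have upper : ∀ t : ℕ, 1 ≤ t →
      rho π (M ^ t * P * M ^ t)
        ≤ rho π (G * P * G) + rho π P * (2 * θ ^ t + θ ^ (2 * t)) := by
    intro t ht
    have hθt : 0 ≤ θ ^ t := pow_nonneg hθ0 t
    have hθ2t : 0 ≤ θ ^ (2 * t) := pow_nonneg hθ0 _
    have hRHS0 : 0 ≤ rho π (G * P * G) + rho π P * (2 * θ ^ t + θ ^ (2 * t)) := by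
      have h1 := rho_nonneg hπpos (G * P * G)
      have h2 := rho_nonneg hπpos P
      nlinarith
    refine rho_le hπpos hRHS0 ?_
    intro f hf hmz
    set g := G.mulVec f with hg_def
    set d := ((M - G) ^ t).mulVec f with hd_def
    have hd_eq : d = (M ^ t).mulVec f - G.mulVec f := by
      rw [hd_def, delta_pow hπpos t ht, Matrix.sub_mulVec]
    have hdecomp : (M ^ t).mulVec f = g + d := by
      rw [hd_eq, hg_def]; abel
    have e1 : (M ^ t * P * M ^ t).mulVec f
        = (M ^ t).mulVec (P.mulVec ((M ^ t).mulVec f)) := by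
      rw [Matrix.mulVec_mulVec, Matrix.mulVec_mulVec]
    have hnum : innerPi π f ((M ^ t * P * M ^ t).mulVec f)
        = innerPi π (g + d) (P.mulVec (g + d)) := by
      rw [e1, adjMpow t, hdecomp]
    have hexp : innerPi π (g + d) (P.mulVec (g + d))
        = innerPi π g (P.mulVec g) + innerPi π g (P.mulVec d)
          + innerPi π d (P.mulVec g) + innerPi π d (P.mulVec d) := by
      rw [Matrix.mulVec_add, ip_add_left, ip_add_right, ip_add_right]
      ring
    have hmz_g : ∑ x, π x * g x = 0 := (mG f).trans hmz
    have hmz_Mt : ∑ x, π x * ((M ^ t).mulVec f) x = 0 := (mMpow t f).trans hmz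
    have hmz_d : ∑ x, π x * d x = 0 := by
      rw [hd_eq]; exact mz_sub hmz_Mt hmz_g
    have hb1 : |innerPi π g (P.mulVec g)| ≤ rho π (G * P * G) * innerPi π f f := by
      have e2 : innerPi π g (P.mulVec g) = innerPi π f ((G * P * G).mulVec f) := by
        calc innerPi π g (P.mulVec g)
            = innerPi π (G.mulVec f) (P.mulVec (G.mulVec f)) := by rw [hg_def]
          _ = innerPi π f (G.mulVec (P.mulVec (G.mulVec f))) := (adjG f _).symm
          _ = innerPi π f ((G * P * G).mulVec f) := by
              rw [Matrix.mulVec_mulVec, Matrix.mulVec_mulVec]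
      rw [e2]
      exact rho_rayleigh hπpos cGPG f hmz
    have hng : normPi π g ≤ normPi π f := by
      rw [hg_def]; exact normPi_contractQ hπpos hG0 hGrev hGrow f
    have hnd : normPi π d ≤ θ ^ t * normPi π f := hΔpow t f
    have hb2 : |innerPi π g (P.mulVec d)| ≤ rho π P * (θ ^ t * innerPi π f f) := by
      have hbil := rho_bilinear hπpos adjP cP hmz_g hmz_d
      have hle : normPi π g * normPi π d ≤ θ ^ t * innerPi π f f := by
        calc normPi π g * normPi π d
            ≤ normPi π f * (θ ^ t * normPi π f) :=
              mul_le_mul hng hnd (normPi_nonneg _) (normPi_nonneg _)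
          _ = θ ^ t * (normPi π f * normPi π f) := by ring
          _ = θ ^ t * innerPi π f f := by rw [normPi_mul_self hπpos]
      calc |innerPi π g (P.mulVec d)|
          ≤ rho π P * (normPi π g * normPi π d) := hbil
        _ ≤ rho π P * (θ ^ t * innerPi π f f) :=
            mul_le_mul_of_nonneg_left hle (rho_nonneg hπpos P)
    have hb3 : |innerPi π d (P.mulVec g)| ≤ rho π P * (θ ^ t * innerPi π f f) := by
      have e3 : innerPi π d (P.mulVec g) = innerPi π g (P.mulVec d) := by
        rw [adjP d g]; exact ip_comm _ _
      rw [e3]; exact hb2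
    have hb4 : |innerPi π d (P.mulVec d)|
        ≤ rho π P * (θ ^ (2 * t) * innerPi π f f) := by
      have hbil := rho_bilinear hπpos adjP cP hmz_d hmz_d
      have hle : normPi π d * normPi π d ≤ θ ^ (2 * t) * innerPi π f f := by
        calc normPi π d * normPi π d
            ≤ (θ ^ t * normPi π f) * (θ ^ t * normPi π f) :=
              mul_le_mul hnd hnd (normPi_nonneg _)
                (mul_nonneg hθt (normPi_nonneg _))
          _ = (θ ^ t * θ ^ t) * (normPi π f * normPi π f) := by ring
          _ = θ ^ (2 * t) * innerPi π f f := by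
              rw [← pow_add, normPi_mul_self hπpos, two_mul]
      calc |innerPi π d (P.mulVec d)|
          ≤ rho π P * (normPi π d * normPi π d) := hbil
        _ ≤ rho π P * (θ ^ (2 * t) * innerPi π f f) :=
            mul_le_mul_of_nonneg_left hle (rho_nonneg hπpos P)
    rw [hnum, hexp]
    calc |innerPi π g (P.mulVec g) + innerPi π g (P.mulVec d)
          + innerPi π d (P.mulVec g) + innerPi π d (P.mulVec d)|
        ≤ |innerPi π g (P.mulVec g)| + |innerPi π g (P.mulVec d)|
          + |innerPi π d (P.mulVec g)| + |innerPi π d (P.mulVec d)| := by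
          exact (abs_add_le _ _).trans (add_le_add_left ((abs_add_le _ _).trans
            (add_le_add_left (abs_add_le _ _) _)) _)
      _ ≤ rho π (G * P * G) * innerPi π f f + rho π P * (θ ^ t * innerPi π f f)
          + rho π P * (θ ^ t * innerPi π f f)
          + rho π P * (θ ^ (2 * t) * innerPi π f f) :=
          add_le_add (add_le_add (add_le_add hb1 hb2) hb3) hb4
      _ = (rho π (G * P * G) + rho π P * (2 * θ ^ t + θ ^ (2 * t)))
          * innerPi π f f := by ring
  -- lower bound
  have lower : ∀ t : ℕ, rho π (G * P * G) ≤ rho π (M ^ t * P * M ^ t) := by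
    intro t
    refine Real.sSup_le ?_ (rho_nonneg hπpos _)
    rintro r ⟨f, hf, hmz, rfl⟩
    set g := G.mulVec f with hg_def
    have hGPG : innerPi π f ((G * P * G).mulVec f) = innerPi π g (P.mulVec g) := by
      calc innerPi π f ((G * P * G).mulVec f)
          = innerPi π f (G.mulVec (P.mulVec (G.mulVec f))) := by
            rw [Matrix.mulVec_mulVec, Matrix.mulVec_mulVec]
        _ = innerPi π (G.mulVec f) (P.mulVec (G.mulVec f)) := adjG f _
        _ = innerPi π g (P.mulVec g) := by rw [hg_def]
    have hMg : (M ^ t).mulVec g = g := by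
      rw [hg_def, Matrix.mulVec_mulVec, mhpow_mul_gibbs hπpos]
    have hQtg : innerPi π g ((M ^ t * P * M ^ t).mulVec g)
        = innerPi π g (P.mulVec g) := by
      have e : (M ^ t * P * M ^ t).mulVec g
          = (M ^ t).mulVec (P.mulVec ((M ^ t).mulVec g)) := by
        conv_rhs => rw [Matrix.mulVec_mulVec, Matrix.mulVec_mulVec]
      rw [e, hMg, adjMpow t, hMg]
    by_cases hg0 : g = 0
    · rw [hGPG, hg0, Matrix.mulVec_zero, ip_zero_right, abs_zero, zero_div]
      exact rho_nonneg hπpos _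
    · have hmz_g : ∑ x, π x * g x = 0 := (mG f).trans hmz
      have h2 : |innerPi π g ((M ^ t * P * M ^ t).mulVec g)| / innerPi π g g
          ≤ rho π (M ^ t * P * M ^ t) :=
        le_rho hπpos (cQt t) hg0 hmz_g
      have h1 : |innerPi π f ((G * P * G).mulVec f)| / innerPi π f f
          ≤ |innerPi π g ((M ^ t * P * M ^ t).mulVec g)| / innerPi π g g := by
        rw [hGPG, hQtg]
        exact div_le_div_of_nonneg_left (abs_nonneg _) (ip_self_pos hπpos hg0)
          (cG f)
      exact h1.trans h2
  constructor
  · intro t ht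
    exact ⟨by linarith [lower t], by linarith [upper t ht]⟩
  · intro hθ1
    have hlow : ∀ᶠ t : ℕ in atTop,
        rho π (G * P * G) ≤ rho π (M ^ t * P * M ^ t) :=
      Filter.Eventually.of_forall lower
    have hup : ∀ᶠ t : ℕ in atTop,
        rho π (M ^ t * P * M ^ t)
          ≤ rho π (G * P * G) + rho π P * (2 * θ ^ t + θ ^ (2 * t)) :=
      Filter.eventually_atTop.mpr ⟨1, upper⟩
    have ht1 : Tendsto (fun t : ℕ => θ ^ t) atTop (𝓝 0) :=
      tendsto_pow_atTop_nhds_zero_of_lt_one hθ0 hθ1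
    have ht2 : Tendsto (fun t : ℕ => θ ^ (2 * t)) atTop (𝓝 0) := by
      have h2 : Tendsto (fun t : ℕ => (θ ^ 2) ^ t) atTop (𝓝 0) :=
        tendsto_pow_atTop_nhds_zero_of_lt_one (sq_nonneg θ) (by nlinarith)
      simpa [pow_mul] using h2
    have hbigt : Tendsto (fun t : ℕ =>
        rho π (G * P * G) + rho π P * (2 * θ ^ t + θ ^ (2 * t))) atTop
        (𝓝 (rho π (G * P * G))) := by
      have hz : Tendsto (fun t : ℕ => rho π P * (2 * θ ^ t + θ ^ (2 * t))) atTop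
          (𝓝 0) := by
        have := ((ht1.const_mul 2).add ht2).const_mul (rho π P)
        simpa using this
      simpa using (tendsto_const_nhds (x := rho π (G * P * G))
        (f := atTop (α := ℕ))).add hz
    exact tendsto_of_tendsto_of_tendsto_of_le_of_le' tendsto_const_nhds hbigt hlow hup
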